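/- Eigenvalue estimate in the main vanishing theorem: let n ≥ 1, 0 ≤ k ≤ n, let p, q be integers with p + q ≥ n + k + 1, q ≥ k, p ≤ n, and let γ₁ ≤ γ₂ ≤ ... ≤ γ_n be real numbers with γ_j ≥ -1/(4n) for all j, γ_j < 1 for all j, and γ_j ≥ 1 - 1/(4n) for all j ≥ k+1. Then Σ_{i=1}^{q} γ_i - Σ_{j=p+1}^{n} γ_j ≥ (q + p - n - k) - (q-k)/(4n) - k/(4n) ≥ 1/2. -/

import Mathlib

/-- The eigenvalue estimate in the main vanishing theorem. -/
theorem eigenvalue_estimate (n k p q : ℕ) (hn : 1 ≤ n) (hk : k ≤ n)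
    (hpq : p + q ≥ n + k + 1) (hqk : q ≥ k) (hpn : p ≤ n) (hqn : q ≤ n)
    (γ : ℕ → ℝ)
    (hmono : ∀ i j, 1 ≤ i → i ≤ j → j ≤ n → γ i ≤ γ j)
    (hlow : ∀ j, 1 ≤ j → j ≤ n → γ j ≥ -1 / (4 * n))
    (hup : ∀ j, 1 ≤ j → j ≤ n → γ j < 1)
    (hbig : ∀ j, k + 1 ≤ j → j ≤ n → γ j ≥ 1 - 1 / (4 * n)) :
    (∑ i ∈ Finset.Icc 1 q, γ i) - (∑ j ∈ Finset.Icc (p + 1) n, γ j) ≥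
        ((q : ℝ) + p - n - k) - ((q : ℝ) - k) / (4 * n) - (k : ℝ) / (4 * n) ∧
      ((q : ℝ) + p - n - k) - ((q : ℝ) - k) / (4 * n) - (k : ℝ) / (4 * n) ≥ 1 / 2 := by
  have hnR : (1 : ℝ) ≤ (n : ℝ) := by exact_mod_cast hn
  have hsplit : Finset.Icc 1 q = Finset.Icc 1 k ∪ Finset.Icc (k + 1) q := by
    ext x; simp [Finset.mem_Icc, Finset.mem_union]; omega
  have hdisj : Disjoint (Finset.Icc 1 k) (Finset.Icc (k + 1) q) := by
    simp [Finset.disjoint_left]; intro a _ ha; omega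
  have h1 : (k : ℝ) * (-1 / (4 * n)) ≤ ∑ i ∈ Finset.Icc 1 k, γ i := by
    have := Finset.card_nsmul_le_sum (Finset.Icc 1 k) γ (-1 / (4 * n))
      (fun i hi => by
        simp only [Finset.mem_Icc] at hi
        exact hlow i hi.1 (le_trans hi.2 hk))
    simpa [Nat.card_Icc, nsmul_eq_mul] using this
  have h2 : ((q : ℝ) - k) * (1 - 1 / (4 * n)) ≤ ∑ i ∈ Finset.Icc (k + 1) q, γ i := by
    have := Finset.card_nsmul_le_sum (Finset.Icc (k + 1) q) γ (1 - 1 / (4 * n))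
      (fun i hi => by
        simp only [Finset.mem_Icc] at hi
        exact hbig i hi.1 (le_trans hi.2 hqn))
    have hcard : (Finset.Icc (k + 1) q).card = q - k := by
      rw [Nat.card_Icc]; omega
    rw [hcard, nsmul_eq_mul] at this
    have : ((q : ℝ) - k) * (1 - 1 / (4 * n)) ≤ ∑ i ∈ Finset.Icc (k + 1) q, γ i := by
      have hc : ((q - k : ℕ) : ℝ) = (q : ℝ) - k := by
        push_cast [hqk]; ring
      rwa [hc] at this
    exact this
  have h3 : ∑ j ∈ Finset.Icc (p + 1) n, γ j ≤ (n : ℝ) - p := by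
    have := Finset.sum_le_card_nsmul (Finset.Icc (p + 1) n) γ 1
      (fun i hi => by
        simp only [Finset.mem_Icc] at hi
        exact le_of_lt (hup i (by omega) hi.2))
    have hcard : (Finset.Icc (p + 1) n).card = n - p := by
      simp [Nat.card_Icc]
    rw [hcard, nsmul_eq_mul, mul_one] at this
    have hc : ((n - p : ℕ) : ℝ) = (n : ℝ) - p := by push_cast [hpn]; ring
    rwa [hc] at this
  have hsumeq : ∑ i ∈ Finset.Icc 1 q, γ i =
      (∑ i ∈ Finset.Icc 1 k, γ i) + ∑ i ∈ Finset.Icc (k + 1) q, γ i := by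
    rw [hsplit, Finset.sum_union hdisj]
  constructor
  · rw [hsumeq]
    have hkq : (k : ℝ) ≤ q := by exact_mod_cast hqk
    have hn0 : (n : ℝ) ≠ 0 := by positivity
    have key : (k : ℝ) * (-1 / (4 * n)) + ((q : ℝ) - k) * (1 - 1 / (4 * n)) - ((n : ℝ) - p)
        = ((q : ℝ) + p - n - k) - ((q : ℝ) - k) / (4 * n) - (k : ℝ) / (4 * n) := by
      field_simp
      ring
    linarith [h1, h2, h3]
  · have hpq' : (n : ℝ) + k + 1 ≤ (p : ℝ) + q := by exact_mod_cast hpq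
    have hqn' : (q : ℝ) ≤ n := by exact_mod_cast hqn
    have hkq : (k : ℝ) ≤ q := by exact_mod_cast hqk
    have h0 : (0 : ℝ) < 4 * n := by linarith
    have : ((q : ℝ) - k) / (4 * n) + (k : ℝ) / (4 * n) = (q : ℝ) / (4 * n) := by
      field_simp
      ring
    rw [sub_sub, this]
    have hq4 : (q : ℝ) / (4 * n) ≤ 1 / 4 := by
      rw [div_le_div_iff₀ h0 (by norm_num)]
      linarith
    linarith
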